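/- Let A be a herd in a braided monoidal category C with reflexive coequalizers preserved by tensoring, and let ϖ : A ⊗ A ⟶ H be the coequalizer of σ and τ. Then there exists a unique morphism μ : H ⊗ H ⟶ H such that μ ∘ (ϖ ⊗ ϖ) = ϖ ∘ (q ⊗ 1_{A⊗A}) : A⊗⁴ ⟶ H, and this μ is associative: μ ∘ (μ ⊗ 1) = μ ∘ (1 ⊗ μ) (up to associator). -/

import Mathlib

open CategoryTheory MonoidalCategory Category

universe v u

variable {C : Type u} [Category.{v} C] [MonoidalCategory C] [BraidedCategory C]

/-- The braiding of the first two factors of a right-nested triple tensor product. -/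
def swap3 (X Y Z : C) : X ⊗ Y ⊗ Z ⟶ Y ⊗ X ⊗ Z :=
  (α_ X Y Z).inv ≫ ((β_ X Y).hom ▷ Z) ≫ (α_ Y X Z).hom

/-- A herd in a braided monoidal category `C`: a comonoid `A` together with a
comonoid morphism `q : A ⊗ A° ⊗ A ⟶ A` satisfying para-associativity and the
two unit laws. -/
structure Herd (C : Type u) [Category.{v} C] [MonoidalCategory C] [BraidedCategory C] where
  A : C
  del : A ⟶ A ⊗ A
  eps : A ⟶ 𝟙_ C
  coassoc : del ≫ (del ▷ A) ≫ (α_ A A A).hom = del ≫ (A ◁ del)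
  counit_left : del ≫ (eps ▷ A) ≫ (λ_ A).hom = 𝟙 A
  counit_right : del ≫ (A ◁ eps) ≫ (ρ_ A).hom = 𝟙 A
  q : A ⊗ A ⊗ A ⟶ A
  q_counit : q ≫ eps = (eps ⊗ₘ eps ⊗ₘ eps) ≫ (𝟙_ C ◁ (λ_ (𝟙_ C)).hom) ≫ (λ_ (𝟙_ C)).hom
  q_comul : q ≫ del =
    (del ⊗ₘ (del ≫ (β_ A A).hom) ⊗ₘ del) ≫
      (α_ A A ((A ⊗ A) ⊗ (A ⊗ A))).hom ≫ (A ◁ (A ◁ (α_ A A (A ⊗ A)).hom)) ≫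
      (A ◁ swap3 A A (A ⊗ A ⊗ A)) ≫
      (A ◁ (A ◁ (A ◁ swap3 A A A))) ≫
      (A ◁ (A ◁ swap3 A A (A ⊗ A))) ≫
      (A ◁ (α_ A A (A ⊗ A ⊗ A)).inv) ≫ (α_ A (A ⊗ A) (A ⊗ A ⊗ A)).inv ≫
      (q ⊗ₘ q)
  q_assoc : (A ◁ (α_ A A (A ⊗ A)).inv) ≫ (α_ A (A ⊗ A) (A ⊗ A)).inv ≫
      (q ▷ (A ⊗ A)) ≫ q = (A ◁ (A ◁ q)) ≫ q
  q_unit_right : (A ◁ del) ≫ q = (A ◁ eps) ≫ (ρ_ A).hom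
  q_unit_left : (del ▷ A) ≫ (α_ A A A).hom ≫ q = (eps ▷ A) ≫ (λ_ A).hom

/-- `σ = (q ⊗ 1) ∘ (1 ⊗ 1 ⊗ δ) : A⊗³ ⟶ A ⊗ A`. -/
def herdSigma (h : Herd C) : h.A ⊗ h.A ⊗ h.A ⟶ h.A ⊗ h.A :=
  (h.A ◁ (h.A ◁ h.del)) ≫ (h.A ◁ (α_ h.A h.A h.A).inv) ≫
    (α_ h.A (h.A ⊗ h.A) h.A).inv ≫ (h.q ▷ h.A)

/-- `τ = 1 ⊗ 1 ⊗ ε : A⊗³ ⟶ A ⊗ A`. -/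
def herdTau (h : Herd C) : h.A ⊗ h.A ⊗ h.A ⟶ h.A ⊗ h.A :=
  (h.A ◁ (h.A ◁ h.eps)) ≫ (h.A ◁ (ρ_ h.A).hom)

/-- The positive braid on `A⊗⁴` with underlying permutation `1,3,4,2`. -/
def c1342 (h : Herd C) : h.A ⊗ h.A ⊗ h.A ⊗ h.A ⟶ h.A ⊗ h.A ⊗ h.A ⊗ h.A :=
  (h.A ◁ swap3 h.A h.A h.A) ≫ (h.A ◁ (h.A ◁ (β_ h.A h.A).hom))


set_option maxHeartbeats 3200000

namespace Herd

variable (h : Herd C)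

/-- `q` applied to the first three strands of `(A⊗A)⊗(A⊗A)`. -/
def QQ : (h.A ⊗ h.A) ⊗ (h.A ⊗ h.A) ⟶ h.A ⊗ h.A :=
  (α_ h.A h.A (h.A ⊗ h.A)).hom ≫ (h.A ◁ (α_ h.A h.A h.A).inv) ≫
    (α_ h.A (h.A ⊗ h.A) h.A).inv ≫ (h.q ▷ h.A)

/-- `q(q(a,b,c),d,e)` -/
def K1 : h.A ⊗ (h.A ⊗ (h.A ⊗ (h.A ⊗ h.A))) ⟶ h.A :=
  (h.A ◁ (α_ h.A h.A (h.A ⊗ h.A)).inv) ≫ (α_ h.A (h.A ⊗ h.A) (h.A ⊗ h.A)).inv ≫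
    (h.q ▷ (h.A ⊗ h.A)) ≫ h.q

/-- `q(a,b,q(c,d,e))` -/
def K2 : h.A ⊗ (h.A ⊗ (h.A ⊗ (h.A ⊗ h.A))) ⟶ h.A :=
  (h.A ◁ (h.A ◁ h.q)) ≫ h.q

lemma K1_eq_K2 : h.K1 = h.K2 := h.q_assoc

def P1 (f : h.A ⊗ (h.A ⊗ (h.A ⊗ (h.A ⊗ h.A))) ⟶ h.A) :
    (h.A ⊗ (h.A ⊗ h.A)) ⊗ (h.A ⊗ h.A) ⟶ h.A ⊗ h.A :=
  ((h.A ◁ (h.A ◁ h.del)) ▷ (h.A ⊗ h.A)) ≫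
    (𝟙 ((h.A ⊗ (h.A ⊗ (h.A ⊗ h.A))) ⊗ (h.A ⊗ h.A)) ⊗≫ (f ▷ h.A))

def SS (g : h.A ⊗ h.A ⟶ h.A) : (h.A ⊗ (h.A ⊗ h.A)) ⊗ (h.A ⊗ h.A) ⟶ h.A ⊗ h.A :=
  𝟙 ((h.A ⊗ (h.A ⊗ h.A)) ⊗ (h.A ⊗ h.A)) ⊗≫ (((h.A ◁ (h.A ◁ g)) ≫ h.q) ▷ h.A)

lemma sigma_QQ : (herdSigma h ▷ (h.A ⊗ h.A)) ≫ h.QQ = h.P1 h.K1 := by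
  dsimp only [herdSigma, QQ, P1, K1]
  monoidal

lemma P1_K2 : h.P1 h.K2 = h.SS ((h.del ▷ h.A) ≫ (α_ h.A h.A h.A).hom ≫ h.q) := by
  dsimp only [P1, K2, SS]
  monoidal

lemma tau_QQ : (herdTau h ▷ (h.A ⊗ h.A)) ≫ h.QQ = h.SS ((h.eps ▷ h.A) ≫ (λ_ h.A).hom) := by
  dsimp only [herdTau, QQ, SS]
  monoidal

lemma left_descent :
    (herdSigma h ▷ (h.A ⊗ h.A)) ≫ h.QQ = (herdTau h ▷ (h.A ⊗ h.A)) ≫ h.QQ := by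
  rw [h.sigma_QQ, h.K1_eq_K2, h.P1_K2, h.q_unit_left, ← h.tau_QQ]

def W (f : h.A ⊗ (h.A ⊗ (h.A ⊗ (h.A ⊗ h.A))) ⟶ h.A) :
    (h.A ⊗ h.A) ⊗ (h.A ⊗ (h.A ⊗ h.A)) ⟶ h.A ⊗ h.A :=
  ((h.A ⊗ h.A) ◁ (h.A ◁ (h.A ◁ h.del))) ≫
    (𝟙 ((h.A ⊗ h.A) ⊗ (h.A ⊗ (h.A ⊗ (h.A ⊗ h.A)))) ⊗≫ (f ▷ h.A))

lemma sigma_QQ' : ((h.A ⊗ h.A) ◁ herdSigma h) ≫ h.QQ = h.W h.K2 := by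
  dsimp only [herdSigma, QQ, W, K2]
  monoidal

lemma W_K1 : h.W h.K1 =
    𝟙 ((h.A ⊗ h.A) ⊗ (h.A ⊗ (h.A ⊗ h.A))) ⊗≫
      (((h.A ⊗ (h.A ⊗ h.A)) ◁ (h.A ◁ h.del)) ≫ (h.q ▷ (h.A ⊗ (h.A ⊗ h.A))) ≫
        (h.A ◁ (α_ h.A h.A h.A).inv) ≫ (α_ h.A (h.A ⊗ h.A) h.A).inv ≫ (h.q ▷ h.A)) := by
  dsimp only [W, K1]
  monoidal

lemma W_K1_sigma : h.W h.K1 =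
    𝟙 ((h.A ⊗ h.A) ⊗ (h.A ⊗ (h.A ⊗ h.A))) ⊗≫ ((h.q ▷ (h.A ⊗ h.A)) ≫ herdSigma h) := by
  rw [h.W_K1]
  dsimp only [monoidalComp, herdSigma]
  simp only [id_comp]
  congr 1
  rw [← assoc, whisker_exchange]
  simp only [assoc]

lemma tau_QQ'aux : ((h.A ⊗ h.A) ◁ herdTau h) ≫ h.QQ =
    𝟙 ((h.A ⊗ h.A) ⊗ (h.A ⊗ (h.A ⊗ h.A))) ⊗≫
      (((h.A ⊗ (h.A ⊗ h.A)) ◁ (h.A ◁ h.eps)) ≫ (h.q ▷ (h.A ⊗ 𝟙_ C)) ≫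
        (h.A ◁ (ρ_ h.A).hom)) := by
  dsimp only [herdTau, QQ]
  monoidal

lemma tau_QQ' : ((h.A ⊗ h.A) ◁ herdTau h) ≫ h.QQ =
    𝟙 ((h.A ⊗ h.A) ⊗ (h.A ⊗ (h.A ⊗ h.A))) ⊗≫ ((h.q ▷ (h.A ⊗ h.A)) ≫ herdTau h) := by
  rw [h.tau_QQ'aux]
  dsimp only [monoidalComp, herdTau]
  simp only [id_comp]
  congr 1
  rw [← assoc, whisker_exchange]
  simp only [assoc]

def P5 (f : h.A ⊗ (h.A ⊗ (h.A ⊗ (h.A ⊗ h.A))) ⟶ h.A) :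
    ((h.A ⊗ h.A) ⊗ (h.A ⊗ h.A)) ⊗ (h.A ⊗ h.A) ⟶ h.A ⊗ h.A :=
  𝟙 (((h.A ⊗ h.A) ⊗ (h.A ⊗ h.A)) ⊗ (h.A ⊗ h.A)) ⊗≫ (f ▷ h.A)

lemma QQ_QQ : (h.QQ ▷ (h.A ⊗ h.A)) ≫ h.QQ = h.P5 h.K1 := by
  dsimp only [QQ, P5, K1]
  monoidal

lemma QQ_QQ' : (α_ (h.A ⊗ h.A) (h.A ⊗ h.A) (h.A ⊗ h.A)).hom ≫ ((h.A ⊗ h.A) ◁ h.QQ) ≫ h.QQ =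
    h.P5 h.K2 := by
  dsimp only [QQ, P5, K2]
  monoidal

lemma QQ_assoc : (h.QQ ▷ (h.A ⊗ h.A)) ≫ h.QQ =
    (α_ (h.A ⊗ h.A) (h.A ⊗ h.A) (h.A ⊗ h.A)).hom ≫ ((h.A ⊗ h.A) ◁ h.QQ) ≫ h.QQ := by
  rw [h.QQ_QQ, h.K1_eq_K2, ← h.QQ_QQ']

end Herd

/-- Let `A` be a herd in a braided monoidal category `C` with reflexive
coequalizers preserved by tensoring, and let `ϖ : A ⊗ A ⟶ H` be the coequalizer of
`σ` and `τ`.  Then there exists a unique morphism `μ : H ⊗ H ⟶ H` such that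
`μ ∘ (ϖ ⊗ₘ ϖ) = ϖ ∘ (q ⊗ 1_{A⊗A}) : A⊗⁴ ⟶ H`, and this `μ` is associative
(up to associator). -/
theorem stmt5 (h : Herd C) (H : C) (ϖ : h.A ⊗ h.A ⟶ H)
    (hcoeq : herdSigma h ≫ ϖ = herdTau h ≫ ϖ)
    (huniv : ∀ {Z : C} (f : h.A ⊗ h.A ⟶ Z),
      herdSigma h ≫ f = herdTau h ≫ f → ∃! g : H ⟶ Z, ϖ ≫ g = f)
    (hunivL : ∀ (X : C) {Z : C} (f : X ⊗ (h.A ⊗ h.A) ⟶ Z),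
      (X ◁ herdSigma h) ≫ f = (X ◁ herdTau h) ≫ f →
        ∃! g : X ⊗ H ⟶ Z, (X ◁ ϖ) ≫ g = f)
    (hunivR : ∀ (X : C) {Z : C} (f : (h.A ⊗ h.A) ⊗ X ⟶ Z),
      (herdSigma h ▷ X) ≫ f = (herdTau h ▷ X) ≫ f →
        ∃! g : H ⊗ X ⟶ Z, (ϖ ▷ X) ≫ g = f) :
    ∃ μ : H ⊗ H ⟶ H,
      ((ϖ ⊗ₘ ϖ) ≫ μ =
        (α_ h.A h.A (h.A ⊗ h.A)).hom ≫ (h.A ◁ (α_ h.A h.A h.A).inv) ≫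
          (α_ h.A (h.A ⊗ h.A) h.A).inv ≫ (h.q ▷ h.A) ≫ ϖ) ∧
      ((μ ▷ H) ≫ μ = (α_ H H H).hom ≫ (H ◁ μ) ≫ μ) ∧
      (∀ μ' : H ⊗ H ⟶ H,
        (ϖ ⊗ₘ ϖ) ≫ μ' =
          (α_ h.A h.A (h.A ⊗ h.A)).hom ≫ (h.A ◁ (α_ h.A h.A h.A).inv) ≫
            (α_ h.A (h.A ⊗ h.A) h.A).inv ≫ (h.q ▷ h.A) ≫ ϖ → μ' = μ)    := by
  classical
  -- epi lemmas
  have epiL : ∀ X : C, Epi (X ◁ ϖ) := by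
    intro X
    constructor
    intro Z u v huv
    obtain ⟨g, -, hg⟩ := hunivL X ((X ◁ ϖ) ≫ u) (by
      rw [← assoc, ← MonoidalCategory.whiskerLeft_comp, hcoeq,
        MonoidalCategory.whiskerLeft_comp, assoc])
    rw [hg u rfl, hg v huv.symm]
  have epiR : ∀ X : C, Epi (ϖ ▷ X) := by
    intro X
    constructor
    intro Z u v huv
    obtain ⟨g, -, hg⟩ := hunivR X ((ϖ ▷ X) ≫ u) (by
      rw [← assoc, ← comp_whiskerRight, hcoeq, comp_whiskerRight, assoc])
    rw [hg u rfl, hg v huv.symm]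
  have epiRR : ∀ Y X : C, Epi ((ϖ ▷ Y) ▷ X) := by
    intro Y X
    have e : (ϖ ▷ Y) ▷ X =
        (α_ (h.A ⊗ h.A) Y X).hom ≫ (ϖ ▷ (Y ⊗ X)) ≫ (α_ H Y X).inv := by
      monoidal
    rw [e]
    haveI := epiR (Y ⊗ X)
    infer_instance
  have epiM : ∀ Y X : C, Epi ((Y ◁ ϖ) ▷ X) := by
    intro Y X
    have e0 : ϖ ▷ X = (β_ (h.A ⊗ h.A) X).hom ≫ (X ◁ ϖ) ≫ (β_ H X).inv := by
      rw [← BraidedCategory.braiding_naturality_left_assoc, Iso.hom_inv_id, comp_id]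
    have e1 : (Y ◁ ϖ) ▷ X =
        (α_ Y (h.A ⊗ h.A) X).hom ≫ (Y ◁ (ϖ ▷ X)) ≫ (α_ Y H X).inv := by
      monoidal
    have e2 : Y ◁ (X ◁ ϖ) =
        (α_ Y X (h.A ⊗ h.A)).inv ≫ ((Y ⊗ X) ◁ ϖ) ≫ (α_ Y X H).hom := by
      monoidal
    rw [e1, e0]
    simp only [MonoidalCategory.whiskerLeft_comp]
    rw [e2]
    haveI := epiL (Y ⊗ X)
    infer_instance
  -- the two descent conditions
  have L1 : (herdSigma h ▷ (h.A ⊗ h.A)) ≫ (h.QQ ≫ ϖ) =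
      (herdTau h ▷ (h.A ⊗ h.A)) ≫ (h.QQ ≫ ϖ) := by
    rw [← assoc, h.left_descent, assoc]
  have L3 : ((h.A ⊗ h.A) ◁ herdSigma h) ≫ (h.QQ ≫ ϖ) =
      ((h.A ⊗ h.A) ◁ herdTau h) ≫ (h.QQ ≫ ϖ) := by
    rw [← assoc, h.sigma_QQ', ← h.K1_eq_K2, h.W_K1_sigma, ← assoc, h.tau_QQ']
    dsimp only [monoidalComp]
    simp only [id_comp, assoc]
    rw [hcoeq]
  -- construct μ in two stages
  obtain ⟨μ₂, hμ₂, -⟩ := hunivR (h.A ⊗ h.A) (h.QQ ≫ ϖ) L1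
  have L2 : (H ◁ herdSigma h) ≫ μ₂ = (H ◁ herdTau h) ≫ μ₂ := by
    haveI := epiR (h.A ⊗ (h.A ⊗ h.A))
    rw [← cancel_epi (ϖ ▷ (h.A ⊗ (h.A ⊗ h.A)))]
    have t : ∀ k : h.A ⊗ (h.A ⊗ h.A) ⟶ h.A ⊗ h.A,
        (ϖ ▷ (h.A ⊗ (h.A ⊗ h.A))) ≫ (H ◁ k) ≫ μ₂ =
          ((h.A ⊗ h.A) ◁ k) ≫ (h.QQ ≫ ϖ) := by
      intro k
      rw [← assoc, ← whisker_exchange, assoc, hμ₂]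
    rw [t, t, L3]
  obtain ⟨μ, hμ, -⟩ := hunivL H μ₂ L2
  have hμϖ : (ϖ ⊗ₘ ϖ) ≫ μ = h.QQ ≫ ϖ := by
    rw [MonoidalCategory.tensorHom_def, assoc, hμ, hμ₂]
  refine ⟨μ, ?_, ?_, ?_⟩
  · rw [hμϖ]
    dsimp only [Herd.QQ]
    simp only [assoc]
  · -- associativity
    have hΦ : (ϖ ⊗ₘ ϖ) ⊗ₘ ϖ =
        ((ϖ ▷ (h.A ⊗ h.A)) ▷ (h.A ⊗ h.A)) ≫ ((H ◁ ϖ) ▷ (h.A ⊗ h.A)) ≫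
          ((H ⊗ H) ◁ ϖ) := by
      simp only [MonoidalCategory.tensorHom_def, comp_whiskerRight, assoc]
    haveI := epiRR (h.A ⊗ h.A) (h.A ⊗ h.A)
    haveI := epiM H (h.A ⊗ h.A)
    haveI := epiL (H ⊗ H)
    haveI : Epi ((ϖ ⊗ₘ ϖ) ⊗ₘ ϖ) := by rw [hΦ]; infer_instance
    rw [← cancel_epi ((ϖ ⊗ₘ ϖ) ⊗ₘ ϖ)]
    have lhs1 : ((ϖ ⊗ₘ ϖ) ⊗ₘ ϖ) ≫ (μ ▷ H) = (h.QQ ▷ (h.A ⊗ h.A)) ≫ (ϖ ⊗ₘ ϖ) := by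
      rw [← tensorHom_id, tensorHom_comp_tensorHom, hμϖ, comp_id, MonoidalCategory.tensorHom_def,
        comp_whiskerRight, assoc, ← MonoidalCategory.tensorHom_def]
    have rhs1 : ((ϖ ⊗ₘ ϖ) ⊗ₘ ϖ) ≫ (α_ H H H).hom =
        (α_ (h.A ⊗ h.A) (h.A ⊗ h.A) (h.A ⊗ h.A)).hom ≫ (ϖ ⊗ₘ (ϖ ⊗ₘ ϖ)) :=
      associator_naturality ϖ ϖ ϖ
    have rhs2 : (ϖ ⊗ₘ (ϖ ⊗ₘ ϖ)) ≫ (H ◁ μ) = ((h.A ⊗ h.A) ◁ h.QQ) ≫ (ϖ ⊗ₘ ϖ) := by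
      rw [← id_tensorHom, tensorHom_comp_tensorHom, hμϖ, comp_id, tensorHom_def',
        MonoidalCategory.whiskerLeft_comp, assoc, ← tensorHom_def']
    have hL : ((ϖ ⊗ₘ ϖ) ⊗ₘ ϖ) ≫ (μ ▷ H) ≫ μ = (h.QQ ▷ (h.A ⊗ h.A)) ≫ h.QQ ≫ ϖ := by
      rw [← assoc, lhs1, assoc, hμϖ]
    have rhs2' : (ϖ ⊗ₘ (ϖ ⊗ₘ ϖ)) ≫ (H ◁ μ) ≫ μ = ((h.A ⊗ h.A) ◁ h.QQ) ≫ h.QQ ≫ ϖ := by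
      rw [← assoc, rhs2, assoc, hμϖ]
    have hR : ((ϖ ⊗ₘ ϖ) ⊗ₘ ϖ) ≫ (α_ H H H).hom ≫ (H ◁ μ) ≫ μ =
        (α_ (h.A ⊗ h.A) (h.A ⊗ h.A) (h.A ⊗ h.A)).hom ≫
          ((h.A ⊗ h.A) ◁ h.QQ) ≫ h.QQ ≫ ϖ := by
      rw [← assoc, rhs1, assoc, rhs2']
    rw [hL, hR, ← assoc, h.QQ_assoc]
    simp only [assoc]
  · -- uniqueness
    intro μ' hμ'
    haveI := epiR (h.A ⊗ h.A)
    haveI := epiL H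
    have key : (ϖ ▷ (h.A ⊗ h.A)) ≫ ((H ◁ ϖ) ≫ μ') =
        (ϖ ▷ (h.A ⊗ h.A)) ≫ ((H ◁ ϖ) ≫ μ) := by
      rw [← assoc, ← MonoidalCategory.tensorHom_def, hμ']
      conv_rhs => rw [← assoc, ← MonoidalCategory.tensorHom_def, hμϖ]
      dsimp only [Herd.QQ]
      simp only [assoc]
    exact (cancel_epi (H ◁ ϖ)).1 ((cancel_epi (ϖ ▷ (h.A ⊗ h.A))).1 key)
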